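/- Let d be admissible for (a,b). Then for every prime q dividing d, the element −q lies in Sel^φ_{S_d}(a,b). -/

import Mathlib

open scoped Classical

/-- The local φ-descent set `L_{a,b}(K)` of the 2-isogeny
`φ : E_{a,b} → E_{-2a, a²-4b}`, viewed as a predicate on `K`. -/
def LocDescent (a b : ℤ) {K : Type*} [Field K] (c : K) : Prop :=
  c ≠ 0 ∧
    ((∃ u : K, c = u ^ 2) ∨
     (∃ u : K, u ≠ 0 ∧ c * u ^ 2 = (a : K) ^ 2 - 4 * (b : K)) ∨
     (∃ x y u : K, x ≠ 0 ∧ u ≠ 0 ∧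
        y ^ 2 = x * (x ^ 2 - 2 * (a : K) * x + ((a : K) ^ 2 - 4 * (b : K))) ∧
        c * u ^ 2 = x))

/-- The φ-Selmer set `Sel^φ(a,b) ⊆ ℚˣ`. -/
def SelSet (a b : ℤ) : Set ℚ :=
  { c | LocDescent a b (c : ℝ) ∧
      ∀ (p : ℕ) [Fact p.Prime], LocDescent a b (c : ℚ_[p]) }

/-- The truncated φ-Selmer set `Sel^φ_{S_d}(a,b)`, where `S_d` consists of `∞`
together with the primes dividing `d`. -/
def SelSetTrunc (a b d : ℤ) : Set ℚ :=
  { c | c ≠ 0 ∧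
      ∀ (p : ℕ) [Fact p.Prime], ¬ (p : ℤ) ∣ d → LocDescent a b (c : ℚ_[p]) }

/-- `d` is admissible for `(a, b)`: a positive squarefree product of an odd number of
distinct primes, each `≡ 7 (mod 8)`, prime to `b(a²-4b)`, with `-q` a square in `ℚ_p`
for every prime `p ∣ 2b(a²-4b)`. -/
def Admissible (a b d : ℤ) : Prop :=
  0 < d ∧ Squarefree d ∧ Odd d.natAbs.primeFactors.card ∧
    ∀ q ∈ d.natAbs.primeFactors,
      q % 8 = 7 ∧ ¬ (q : ℤ) ∣ b * (a ^ 2 - 4 * b) ∧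
        ∀ (p : ℕ) [Fact p.Prime], (p : ℤ) ∣ 2 * b * (a ^ 2 - 4 * b) →
          ∃ u : ℚ_[p], u ^ 2 = ((-q : ℤ) : ℚ_[p])

/-- `λ_q(c)`: the parity of the `q`-adic valuation of `c`. -/
noncomputable def lamF (q : ℕ) (c : ℚ) : ZMod 2 := ((padicValRat q c : ℤ) : ZMod 2)

/-- `γ_q(c)`: `0` if the unit part `c · q^{-v_q(c)}` is a square in `ℚ_qˣ`, `1` otherwise. -/
noncomputable def gamF (q : ℕ) [Fact q.Prime] (c : ℚ) : ZMod 2 :=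
  if ∃ u : ℚ_[q], u ^ 2 = ((c * (q : ℚ) ^ (-(padicValRat q c)) : ℚ) : ℚ_[q]) then 0 else 1

/-- `ε_∞(c)`: `0` if `c > 0`, `1` otherwise. -/
def epsF (c : ℚ) : ZMod 2 := if 0 < c then 0 else 1

/-- `q ∈ T_d^-`: the Legendre symbol `(d/q | q)` equals `+1` iff the roots of
`X² - 2aX + (a²-4b)` are squares in `ℚ_qˣ`. -/
def InTdMinus (a b d : ℤ) (q : ℕ) [Fact q.Prime] : Prop :=
  (legendreSym q (d / q) = 1) ↔
    ∀ β : ℚ_[q],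
      β ^ 2 - 2 * (a : ℚ_[q]) * β + ((a : ℚ_[q]) ^ 2 - 4 * (b : ℚ_[q])) = 0 →
      ∃ u : ℚ_[q], u ^ 2 = β

/-- The matrix `A_d` over `𝔽₂`, indexed by the primes dividing `d`. -/
noncomputable def matA (a b d : ℤ) :
    Matrix {q : ℕ // q ∈ d.natAbs.primeFactors} {q : ℕ // q ∈ d.natAbs.primeFactors}
      (ZMod 2) :=
  Matrix.of fun p q =>
    haveI : Fact (p.1).Prime := ⟨Nat.prime_of_mem_primeFactors p.2⟩
    if p = q then (if InTdMinus a b d p.1 then 1 else 0)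
    else if legendreSym p.1 (q.1 : ℤ) = 1 then 0 else 1

/-- The entrywise complement `Ā_d = A_d + J`. -/
noncomputable def matABar (a b d : ℤ) :
    Matrix {q : ℕ // q ∈ d.natAbs.primeFactors} {q : ℕ // q ∈ d.natAbs.primeFactors}
      (ZMod 2) :=
  Matrix.of fun p q => matA a b d p q + 1

/-- `Ã_d`: `A_d` with an all-ones column prepended. -/
noncomputable def matATilde (a b d : ℤ) :
    Matrix {q : ℕ // q ∈ d.natAbs.primeFactors}
      (Unit ⊕ {q : ℕ // q ∈ d.natAbs.primeFactors}) (ZMod 2) :=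
  Matrix.of fun p => Sum.elim (fun _ => 1) (fun q => matA a b d p q)

/-- `Â_d`: an all-ones row on top of `Ā_d`. -/
noncomputable def matAHat (a b d : ℤ) :
    Matrix (Unit ⊕ {q : ℕ // q ∈ d.natAbs.primeFactors})
      {q : ℕ // q ∈ d.natAbs.primeFactors} (ZMod 2) :=
  Matrix.of (Sum.elim (fun _ _ => 1) (fun p q => matA a b d p q + 1))

/-- `η_φ(d) = 1`. -/
def EtaOne (a b d : ℤ) : Prop :=
  ∃ c ∈ SelSetTrunc a b d,
    epsF c + ∑ q ∈ d.natAbs.primeFactors, lamF q c = 1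

/-- The subgroup of squares in `ℚˣ`. -/
def QSq : Subgroup ℚˣ := (powMonoidHom 2 : ℚˣ →* ℚˣ).range

/-- The φ-Selmer group `Sel^φ(E_{a,b}/ℚ)`: the image of `Sel^φ(a,b)` in `ℚˣ/(ℚˣ)²`. -/
def SelGroup (a b : ℤ) : Set (ℚˣ ⧸ QSq) :=
  { x | ∃ c : ℚˣ, (c : ℚ) ∈ SelSet a b ∧ (QuotientGroup.mk c : ℚˣ ⧸ QSq) = x }


section AuxFF

open Finset

variable {F : Type*} [Field F] [Fintype F] [DecidableEq F]

private lemma sum_qc_shift (hF : ringChar F ≠ 2) (c : F) :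
    ∑ x : F, quadraticChar F (x - c) = 0 := by
  rw [← quadraticChar_sum_zero hF]
  exact Fintype.sum_equiv (Equiv.subRight c) _ _ (fun x => rfl)

private lemma sumA (hF : ringChar F ≠ 2) {γ : F} (hγ : γ ≠ 0) :
    ∑ x : F, quadraticChar F (x * (x - γ)) = -1 := by
  have h0 : quadraticChar F ((0 : F) * (0 - γ)) = 0 := by
    rw [zero_mul, MulChar.map_zero]
  rw [← Finset.sum_erase_add univ _ (mem_univ (0 : F)), h0, add_zero]
  have step : ∀ x ∈ univ.erase (0 : F),
      quadraticChar F (x * (x - γ)) = quadraticChar F (1 - γ * x⁻¹) := by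
    intro x hx
    have hx0 : x ≠ 0 := (mem_erase.mp hx).1
    have : x * (x - γ) = x ^ 2 * (1 - γ * x⁻¹) := by field_simp
    rw [this, map_mul, quadraticChar_sq_one' hx0, one_mul]
  rw [Finset.sum_congr rfl step]
  have bij : ∑ x ∈ univ.erase (0 : F), quadraticChar F (1 - γ * x⁻¹)
      = ∑ u ∈ univ.erase (1 : F), quadraticChar F u := by
    refine Finset.sum_nbij' (fun x => 1 - γ * x⁻¹) (fun u => γ * (1 - u)⁻¹) ?_ ?_ ?_ ?_ ?_
    · intro x hx
      have hx0 : x ≠ 0 := (mem_erase.mp hx).1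
      refine mem_erase.mpr ⟨?_, mem_univ _⟩
      intro h
      have : γ * x⁻¹ = 0 := by linear_combination -h
      rcases mul_eq_zero.mp this with h' | h'
      · exact hγ h'
      · exact (inv_ne_zero hx0) h'
    · intro u hu
      have hu1 : u ≠ 1 := (mem_erase.mp hu).1
      refine mem_erase.mpr ⟨mul_ne_zero hγ (inv_ne_zero (sub_ne_zero.mpr (Ne.symm hu1))),
        mem_univ _⟩
    · intro x hx
      have hx0 : x ≠ 0 := (mem_erase.mp hx).1
      field_simp
      rw [sub_sub_cancel, div_self hγ]
    · intro u hu
      have hu1 : u ≠ 1 := (mem_erase.mp hu).1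
      have h1u : (1 : F) - u ≠ 0 := sub_ne_zero.mpr (Ne.symm hu1)
      field_simp
      ring
    · intro x hx; rfl
  rw [bij, Finset.sum_erase_eq_sub (mem_univ (1 : F)), quadraticChar_sum_zero hF, map_one]
  norm_num

private lemma sumA' (hF : ringChar F ≠ 2) {c : F} (hc : c ≠ 0) :
    ∑ z : F, quadraticChar F (z ^ 2 - c) = -1 := by
  have fib := Finset.sum_fiberwise (univ : Finset F) (fun z => z ^ 2)
      (fun z => quadraticChar F (z ^ 2 - c))
  rw [← fib]
  have inner : ∀ w : F, ∑ z ∈ univ.filter (fun z => z ^ 2 = w),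
      quadraticChar F (z ^ 2 - c) = (quadraticChar F w + 1) * quadraticChar F (w - c) := by
    intro w
    have : ∀ z ∈ univ.filter (fun z => z ^ 2 = w),
        quadraticChar F (z ^ 2 - c) = quadraticChar F (w - c) := by
      intro z hz
      rw [(mem_filter.mp hz).2]
    rw [Finset.sum_congr rfl this, Finset.sum_const, nsmul_eq_mul]
    congr 1
    have := quadraticChar_card_sqrts hF w
    rw [← this]
    norm_cast
    rw [Set.toFinset_setOf]
  rw [Finset.sum_congr rfl (fun w _ => inner w)]
  have expand : ∀ w : F, (quadraticChar F w + 1) * quadraticChar F (w - c)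
      = quadraticChar F (w * (w - c)) + quadraticChar F (w - c) := by
    intro w
    rw [map_mul]; ring
  rw [Finset.sum_congr rfl (fun w _ => expand w), Finset.sum_add_distrib,
    sumA hF hc, sum_qc_shift hF, add_zero]

private lemma exists_good (hF : ringChar F ≠ 2) (A : F) {c : F} (hc : c ≠ 0)
    (h0 : quadraticChar F (A ^ 2 - c) = 1)
    (hroots : ∀ r : F, (r - A) ^ 2 = c → quadraticChar F r ≠ -1) :
    ∃ x : F, quadraticChar F x = -1 ∧ quadraticChar F ((x - A) ^ 2 - c) = -1 := by
  by_contra hcon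
  push_neg at hcon
  have hg1 : ∀ x : F, quadraticChar F x = -1 →
      quadraticChar F ((x - A) ^ 2 - c) = 1 := by
    intro x hx
    rcases quadraticChar_isQuadratic F ((x - A) ^ 2 - c) with h | h | h
    · exfalso
      have : (x - A) ^ 2 = c := by
        have := quadraticChar_eq_zero_iff.mp h
        linear_combination this
      exact hroots x this hx
    · exact h
    · exact absurd h (hcon x hx)
  have htot : ∑ x : F, quadraticChar F ((x - A) ^ 2 - c) = -1 := by
    rw [← sumA' hF hc]
    exact Fintype.sum_equiv (Equiv.subRight A) _ _ (fun x => rfl)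
  classical
  set P : F → Prop := fun x => quadraticChar F x = -1 with hP
  have hsplitg := Finset.sum_filter_add_sum_filter_not univ P
      (fun x => quadraticChar F ((x - A) ^ 2 - c))
  have hsplitx := Finset.sum_filter_add_sum_filter_not univ P
      (fun x => quadraticChar F x)
  set Af := univ.filter P with hA
  set Bf := univ.filter (fun x => ¬ P x) with hB
  have hsumAg : ∑ x ∈ Af, quadraticChar F ((x - A) ^ 2 - c) = (Af.card : ℤ) := by
    rw [Finset.sum_congr rfl (fun x hx => hg1 x (mem_filter.mp hx).2),
      Finset.sum_const, nsmul_eq_mul, mul_one]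
  have hsumAx : ∑ x ∈ Af, quadraticChar F x = -(Af.card : ℤ) := by
    rw [Finset.sum_congr rfl (fun x hx => (mem_filter.mp hx).2),
      Finset.sum_const, nsmul_eq_mul, mul_neg_one]
  have h0B : (0 : F) ∈ Bf := by
    refine mem_filter.mpr ⟨mem_univ _, ?_⟩
    simp [hP]
  have hsumBx : ∑ x ∈ Bf, quadraticChar F x = (Bf.card : ℤ) - 1 := by
    rw [← Finset.add_sum_erase _ _ h0B]
    have : ∀ x ∈ Bf.erase 0, quadraticChar F x = 1 := by
      intro x hx
      have hx0 : x ≠ 0 := (mem_erase.mp hx).1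
      have hxB : ¬ P x := (mem_filter.mp (mem_erase.mp hx).2).2
      rcases quadraticChar_isQuadratic F x with h | h | h
      · exact absurd (quadraticChar_eq_zero_iff.mp h) hx0
      · exact h
      · exact absurd h hxB
    rw [Finset.sum_congr rfl this, MulChar.map_zero, Finset.sum_const,
      Finset.card_erase_of_mem h0B]
    have hpos : 0 < Bf.card := Finset.card_pos.mpr ⟨0, h0B⟩
    simp only [nsmul_eq_mul, mul_one, zero_add]
    omega
  have hsumBg : (2 : ℤ) - (Bf.card : ℤ) ≤ ∑ x ∈ Bf, quadraticChar F ((x - A) ^ 2 - c) := by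
    rw [← Finset.add_sum_erase _ _ h0B]
    have h00 : quadraticChar F ((0 - A) ^ 2 - c) = 1 := by
      have : ((0 : F) - A) ^ 2 - c = A ^ 2 - c := by ring
      rw [this]; exact h0
    rw [h00]
    have hge : ∀ x ∈ Bf.erase 0, (-1 : ℤ) ≤ quadraticChar F ((x - A) ^ 2 - c) := by
      intro x _
      rcases quadraticChar_isQuadratic F ((x - A) ^ 2 - c) with h | h | h <;> rw [h] <;> norm_num
    have := Finset.card_nsmul_le_sum (Bf.erase 0)
      (fun x => quadraticChar F ((x - A) ^ 2 - c)) (-1) hge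
    rw [Finset.card_erase_of_mem h0B] at this
    have hpos : 0 < Bf.card := Finset.card_pos.mpr ⟨0, h0B⟩
    simp only [smul_eq_mul, nsmul_eq_mul, mul_neg_one, mul_one] at this
    omega
  rw [htot] at hsplitg
  rw [quadraticChar_sum_zero hF] at hsplitx
  rw [hsumAg] at hsplitg
  rw [hsumAx] at hsplitx
  rw [hsumBx] at hsplitx
  omega

end AuxFF

section AuxPadic

variable {p : ℕ} [Fact p.Prime]

private lemma toZMod_zero_iff (x : ℤ_[p]) : PadicInt.toZMod x = 0 ↔ ‖x‖ < 1 := by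
  rw [← RingHom.mem_ker, PadicInt.ker_toZMod, PadicInt.maximalIdeal_eq_span_p,
    Ideal.mem_span_singleton, ← PadicInt.norm_lt_one_iff_dvd]

private lemma norm_one_of_toZMod_ne_zero {x : ℤ_[p]} (h : PadicInt.toZMod x ≠ 0) : ‖x‖ = 1 :=
  le_antisymm (PadicInt.norm_le_one x)
    (not_lt.mp (fun hlt => h ((toZMod_zero_iff x).mpr hlt)))

private lemma exists_sqrt (hp : p ≠ 2) (z : ℤ_[p]) (s₀ : ZMod p) (hs0 : s₀ ≠ 0)
    (hs : s₀ ^ 2 = PadicInt.toZMod z) :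
    ∃ w : ℤ_[p], w ^ 2 = z ∧ PadicInt.toZMod w = s₀ := by
  set a : ℤ_[p] := ((s₀.val : ℕ) : ℤ_[p]) with ha_def
  have ha : PadicInt.toZMod a = s₀ := by
    rw [ha_def, map_natCast, ZMod.natCast_zmod_val]
  set Fp : Polynomial ℤ_[p] := Polynomial.X ^ 2 - Polynomial.C z with hFp
  have heval : Fp.eval a = a ^ 2 - z := by simp [hFp]
  have hderiv : Fp.derivative.eval a = 2 * a := by
    simp [hFp, Polynomial.derivative_sub, Polynomial.derivative_X_pow]
    exact Or.inl one_add_one_eq_two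
  have h2 : PadicInt.toZMod (2 * a) ≠ 0 := by
    rw [map_mul, ha]
    apply mul_ne_zero _ hs0
    rw [show (2 : ℤ_[p]) = ((2 : ℕ) : ℤ_[p]) by norm_num, map_natCast,
      Ne, ZMod.natCast_eq_zero_iff]
    intro hdvd
    exact hp ((Nat.prime_dvd_prime_iff_eq (Fact.out) Nat.prime_two).mp hdvd)
  have hnd : ‖Fp.derivative.eval a‖ = 1 := by
    rw [hderiv]; exact norm_one_of_toZMod_ne_zero h2
  have hlt : ‖Fp.eval a‖ < ‖Fp.derivative.eval a‖ ^ 2 := by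
    rw [hnd, heval, one_pow]
    rw [← toZMod_zero_iff]
    rw [map_sub, map_pow, ha, hs]
    ring
  obtain ⟨w, hw0, hwa, -, -⟩ := hensels_lemma hlt
  refine ⟨w, ?_, ?_⟩
  · have : w ^ 2 - z = 0 := by simpa [hFp] using hw0
    exact sub_eq_zero.mp this
  · rw [Polynomial.coe_aeval_eq_eval, hnd] at hwa
    have : PadicInt.toZMod (w - a) = 0 := (toZMod_zero_iff _).mpr hwa
    rw [map_sub, ha, sub_eq_zero] at this
    exact this

private lemma exists_sqrt' (hp : p ≠ 2) (z : ℤ_[p])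
    (h1 : quadraticChar (ZMod p) (PadicInt.toZMod z) = 1) :
    ∃ w : ℤ_[p], w ^ 2 = z := by
  have hnz : PadicInt.toZMod z ≠ 0 := by
    intro h
    rw [h, MulChar.map_zero] at h1
    norm_num at h1
  obtain ⟨s, hs⟩ := (quadraticChar_one_iff_isSquare hnz).mp h1
  have hs0 : s ≠ 0 := by
    intro h; rw [h, mul_zero] at hs; exact hnz hs
  obtain ⟨w, hw, -⟩ := exists_sqrt hp z s hs0 (by rw [hs]; ring)
  exact ⟨w, hw⟩

end AuxPadic

private lemma pcoe_two {p : ℕ} [Fact p.Prime] : (((2 : ℤ_[p])) : ℚ_[p]) = 2 := by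
  rw [show (2 : ℤ_[p]) = ((2 : ℕ) : ℤ_[p]) by norm_cast, PadicInt.coe_natCast]
  norm_cast

private lemma pcoe_four {p : ℕ} [Fact p.Prime] : (((4 : ℤ_[p])) : ℚ_[p]) = 4 := by
  rw [show (4 : ℤ_[p]) = ((4 : ℕ) : ℤ_[p]) by norm_cast, PadicInt.coe_natCast]
  norm_cast

private lemma unit_helper {K : Type*} [Field K] {N X W : K} (hN : N ≠ 0) (hX : X ≠ 0)
    (hW : W ^ 2 = X * N) : ∃ u : K, u ≠ 0 ∧ N * u ^ 2 = X := by
  have hW0 : W ≠ 0 := by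
    intro h
    rw [h] at hW
    exact (mul_ne_zero hX hN) (by rw [← hW]; ring)
  refine ⟨W * N⁻¹, mul_ne_zero hW0 (inv_ne_zero hN), ?_⟩
  field_simp
  linear_combination hW

theorem stmt6 (a b : ℤ) (hab : b * (a ^ 2 - 4 * b) ≠ 0) (d : ℤ)
    (hd : Admissible a b d) :
    ∀ q : ℕ, q.Prime → (q : ℤ) ∣ d → (-(q : ℚ)) ∈ SelSetTrunc a b d := by
  obtain ⟨hdpos, -, -, hq'⟩ := hd
  intro q hq hqd
  have hdne : d.natAbs ≠ 0 := Int.natAbs_ne_zero.mpr (ne_of_gt hdpos)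
  have hqmem : q ∈ d.natAbs.primeFactors := by
    refine Nat.mem_primeFactors.mpr ⟨hq, ?_, hdne⟩
    have := Int.natAbs_dvd_natAbs.mpr hqd
    simpa using this
  obtain ⟨-, hqb, hqsq⟩ := hq' q hqmem
  have hqQ : (q : ℚ) ≠ 0 := Nat.cast_ne_zero.mpr hq.pos.ne'
  refine ⟨neg_ne_zero.mpr hqQ, ?_⟩
  intro p hfp hpd
  have hc0 : ((-(q : ℚ) : ℚ) : ℚ_[p]) ≠ 0 := by
    rw [Rat.cast_ne_zero]
    exact neg_ne_zero.mpr hqQ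
  by_cases hpbad : (p : ℤ) ∣ 2 * b * (a ^ 2 - 4 * b)
  · obtain ⟨u, hu⟩ := hqsq p hpbad
    refine ⟨hc0, Or.inl ⟨u, ?_⟩⟩
    rw [hu]
    push_cast
    ring
  · have hp2 : p ≠ 2 := by
      rintro rfl
      exact hpbad ⟨b * (a ^ 2 - 4 * b), by ring⟩
    have hpp : Prime (p : ℤ) := Int.prime_iff_natAbs_prime.mpr (by simpa using hfp.out)
    have hpb : ¬ (p : ℤ) ∣ b := fun h => hpbad ((h.mul_left 2).mul_right _)
    have hpc : ¬ (p : ℤ) ∣ (a ^ 2 - 4 * b) := fun h => hpbad (h.mul_left (2 * b))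
    have hpq : p ≠ q := fun h => hpd (by rw [h]; exact hqd)
    have hchar : ringChar (ZMod p) ≠ 2 := by
      rw [ZMod.ringChar_zmod_n]; exact hp2
    have hq0 : ((-(q : ℤ) : ℤ) : ZMod p) ≠ 0 := by
      rw [Ne, ZMod.intCast_zmod_eq_zero_iff_dvd, dvd_neg]
      intro h
      have h' : p ∣ q := Int.ofNat_dvd.mp (by exact_mod_cast h)
      exact hpq ((Nat.prime_dvd_prime_iff_eq hfp.out hq).mp h')
    have hcnz : (((a ^ 2 - 4 * b : ℤ)) : ZMod p) ≠ 0 := by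
      rw [Ne, ZMod.intCast_zmod_eq_zero_iff_dvd]; exact hpc
    have h4b : (((4 * b : ℤ)) : ZMod p) ≠ 0 := by
      rw [Ne, ZMod.intCast_zmod_eq_zero_iff_dvd]
      intro h
      rcases hpp.dvd_mul.mp h with h4 | hb
      · have h4' : p ∣ 4 := Int.ofNat_dvd.mp (by exact_mod_cast h4)
        have h2' : p ∣ 2 := hfp.out.dvd_of_dvd_pow (show p ∣ 2 ^ 2 by simpa using h4')
        exact hp2 ((Nat.prime_dvd_prime_iff_eq hfp.out Nat.prime_two).mp h2')
      · exact hpb hb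
    set N : ℚ_[p] := -(q : ℚ_[p]) with hNdef
    have hN : N ≠ 0 := by
      rw [hNdef, neg_ne_zero]
      exact Nat.cast_ne_zero.mpr hq.pos.ne'
    have hcN : ((-(q : ℚ) : ℚ) : ℚ_[p]) = N := by rw [hNdef]; push_cast; ring
    have hNZ : (((-(q : ℤ) : ℤ) : ℤ_[p]) : ℚ_[p]) = N := by rw [hNdef]; push_cast; ring
    rcases quadraticChar_isQuadratic (ZMod p) (((-(q : ℤ) : ℤ)) : ZMod p) with hχ | hχ | hχ
    · exact absurd (quadraticChar_eq_zero_iff.mp hχ) hq0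
    · -- -q is a square in ℚ_p
      obtain ⟨w, hw⟩ := exists_sqrt' hp2 (((-(q : ℤ) : ℤ)) : ℤ_[p]) (by rwa [map_intCast])
      refine ⟨hc0, Or.inl ⟨(w : ℚ_[p]), ?_⟩⟩
      have hw' : ((w : ℚ_[p])) ^ 2 = (((-(q : ℤ) : ℤ) : ℤ_[p]) : ℚ_[p]) := by
        exact_mod_cast congrArg (fun t : ℤ_[p] => (t : ℚ_[p])) hw
      rw [hcN, ← hNZ, ← hw']
    · -- -q is a nonsquare unit
      rcases quadraticChar_isQuadratic (ZMod p) (((a ^ 2 - 4 * b : ℤ)) : ZMod p)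
        with hχc | hχc | hχc
      · exact absurd (quadraticChar_eq_zero_iff.mp hχc) hcnz
      · -- a² - 4b is a square: need a point on the curve
        by_cases hroot : ∃ r : ZMod p, quadraticChar (ZMod p) r = -1 ∧
            (r - ((a : ℤ) : ZMod p)) ^ 2 = (((4 * b : ℤ)) : ZMod p)
        · -- 2-torsion point with nonsquare x-coordinate
          obtain ⟨r, hr1, hr2⟩ := hroot
          have hr0 : r ≠ 0 := by
            intro h
            rw [h, MulChar.map_zero] at hr1
            norm_num at hr1
          have hs0 : r - ((a : ℤ) : ZMod p) ≠ 0 := by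
            intro h
            rw [h] at hr2
            exact h4b (by rw [← hr2]; ring)
          obtain ⟨T, hT, hT0⟩ := exists_sqrt hp2 (((4 * b : ℤ)) : ℤ_[p])
            (r - ((a : ℤ) : ZMod p)) hs0 (by rw [map_intCast]; exact hr2)
          set x : ℤ_[p] := ((a : ℤ) : ℤ_[p]) + T with hxdef
          have hxz : PadicInt.toZMod x = r := by
            rw [hxdef, map_add, map_intCast, hT0]; ring
          have hx0 : (x : ℚ_[p]) ≠ 0 := by
            rw [PadicInt.coe_ne_zero]
            intro h
            exact hr0 (by rw [← hxz, h, map_zero])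
          obtain ⟨w, hw⟩ := exists_sqrt' hp2 (x * (((-(q : ℤ) : ℤ)) : ℤ_[p])) (by
            rw [map_mul, map_intCast, map_mul, hxz, hr1, hχ]
            norm_num)
          have hWeq : ((w : ℚ_[p])) ^ 2 = (x : ℚ_[p]) * N := by
            have := congrArg (fun t : ℤ_[p] => (t : ℚ_[p])) hw
            push_cast at this
            linear_combination this - (x : ℚ_[p]) * hNdef
          obtain ⟨u, hu0, huX⟩ := unit_helper hN hx0 hWeq
          refine ⟨hc0, Or.inr (Or.inr ⟨(x : ℚ_[p]), 0, u, hx0, hu0, ?_, ?_⟩)⟩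
          · have hT' : (T : ℚ_[p]) ^ 2 = 4 * (b : ℚ_[p]) := by
              have := congrArg (fun t : ℤ_[p] => (t : ℚ_[p])) hT
              push_cast at this
              exact this
            have hxq : (x : ℚ_[p]) = (a : ℚ_[p]) + (T : ℚ_[p]) := by
              rw [hxdef]; push_cast; ring
            rw [hxq]
            linear_combination (-(a : ℚ_[p]) - (T : ℚ_[p])) * hT'
          · rw [hcN]; exact huX
        · -- generic point via counting
          push_neg at hroot
          have h0' : quadraticChar (ZMod p)
              ((((a : ℤ)) : ZMod p) ^ 2 - 4 * (((b : ℤ)) : ZMod p)) = 1 := by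
            have he : (((a : ℤ)) : ZMod p) ^ 2 - 4 * (((b : ℤ)) : ZMod p)
                = (((a ^ 2 - 4 * b : ℤ)) : ZMod p) := by push_cast; ring
            rw [he]; exact hχc
          have hc4 : (4 : ZMod p) * (((b : ℤ)) : ZMod p) ≠ 0 := by
            have he : (4 : ZMod p) * (((b : ℤ)) : ZMod p) = (((4 * b : ℤ)) : ZMod p) := by
              push_cast; ring
            rw [he]; exact h4b
          obtain ⟨x₀, hx1, hx2⟩ := exists_good hchar (((a : ℤ)) : ZMod p) hc4
            (by
              have he : (((a : ℤ)) : ZMod p) ^ 2 - (4 : ZMod p) * (((b : ℤ)) : ZMod p)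
                  = (((a : ℤ)) : ZMod p) ^ 2 - 4 * (((b : ℤ)) : ZMod p) := by ring
              rw [he]; exact h0')
            (by
              intro r hr hneg
              refine hroot r hneg ?_
              rw [hr]
              push_cast
              ring)
          set x : ℤ_[p] := ((x₀.val : ℕ) : ℤ_[p]) with hxdef
          have hxz : PadicInt.toZMod x = x₀ := by
            rw [hxdef, map_natCast, ZMod.natCast_zmod_val]
          have hx00 : x₀ ≠ 0 := by
            intro h
            rw [h, MulChar.map_zero] at hx1
            norm_num at hx1
          have hx0 : (x : ℚ_[p]) ≠ 0 := by
            rw [PadicInt.coe_ne_zero]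
            intro h
            exact hx00 (by rw [← hxz, h, map_zero])
          set fv : ℤ_[p] := x * (x ^ 2 - 2 * ((a : ℤ) : ℤ_[p]) * x
            + (((a : ℤ) : ℤ_[p]) ^ 2 - 4 * ((b : ℤ) : ℤ_[p]))) with hfvdef
          have hfz : PadicInt.toZMod fv
              = x₀ * ((x₀ - (((a : ℤ)) : ZMod p)) ^ 2
                - 4 * (((b : ℤ)) : ZMod p)) := by
            rw [hfvdef]
            push_cast [map_mul, map_sub, map_add, map_pow, map_intCast, map_ofNat, hxz]
            ring
          obtain ⟨y, hy⟩ := exists_sqrt' hp2 fv (by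
            rw [hfz, map_mul, hx1, hx2]
            norm_num)
          obtain ⟨w, hw⟩ := exists_sqrt' hp2 (x * (((-(q : ℤ) : ℤ)) : ℤ_[p])) (by
            rw [map_mul, map_intCast, map_mul, hxz, hx1, hχ]
            norm_num)
          have hWeq : ((w : ℚ_[p])) ^ 2 = (x : ℚ_[p]) * N := by
            have := congrArg (fun t : ℤ_[p] => (t : ℚ_[p])) hw
            push_cast at this
            linear_combination this - (x : ℚ_[p]) * hNdef
          obtain ⟨u, hu0, huX⟩ := unit_helper hN hx0 hWeq
          refine ⟨hc0, Or.inr (Or.inr ⟨(x : ℚ_[p]), (y : ℚ_[p]), u, hx0, hu0, ?_, ?_⟩)⟩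
          · rw [hfvdef] at hy
            have := congrArg (fun t : ℤ_[p] => (t : ℚ_[p])) hy
            push_cast [pcoe_two, pcoe_four] at this
            linear_combination this
          · rw [hcN]; exact huX
      · -- a² - 4b is a nonsquare: the kernel class
        obtain ⟨w, hw⟩ := exists_sqrt' hp2 ((((-(q : ℤ)) * (a ^ 2 - 4 * b) : ℤ)) : ℤ_[p]) (by
          rw [map_intCast, Int.cast_mul, map_mul, hχ, hχc]
          norm_num)
        have hX : ((a : ℚ_[p])) ^ 2 - 4 * (b : ℚ_[p]) ≠ 0 := by
          have hz : (a ^ 2 - 4 * b : ℤ) ≠ 0 := by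
            intro h
            exact hpc (by rw [h]; exact dvd_zero _)
          have h' : (((a ^ 2 - 4 * b : ℤ)) : ℚ_[p]) ≠ 0 := Int.cast_ne_zero.mpr hz
          push_cast at h'
          exact h'
        have hWeq : ((w : ℚ_[p])) ^ 2 = ((a : ℚ_[p]) ^ 2 - 4 * (b : ℚ_[p])) * N := by
          have := congrArg (fun t : ℤ_[p] => (t : ℚ_[p])) hw
          push_cast [pcoe_two, pcoe_four] at this
          linear_combination this - ((a : ℚ_[p]) ^ 2 - 4 * (b : ℚ_[p])) * hNdef
        obtain ⟨u, hu0, huX⟩ := unit_helper hN hX hWeq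
        refine ⟨hc0, Or.inr (Or.inl ⟨u, hu0, ?_⟩)⟩
        rw [hcN]
        exact huX
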